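/- arXiv:2202.03322 — 4 statements merged into one kernel-verified Lean document; each statement's English description precedes it below -/
import Mathlib

section
/- For any graph G, the minimum number of vertices whose deletion makes G bipartite is at most the minimum number of edges whose contraction makes G bipartite: oct(G) ≤ bc(G). -/
open SimpleGraph

/-- A set of vertices is a vertex cover if it meets every edge. -/
def IsVertexCover {V : Type*} (G : SimpleGraph V) (C : Set V) : Prop :=
  ∀ ⦃u v : V⦄, G.Adj u v → u ∈ C ∨ v ∈ C

/-- The minimum vertex cover number of a graph. -/
noncomputable def vc {V : Type*} (G : SimpleGraph V) : ℕ :=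
  sInf {n | ∃ C : Set V, _root_.IsVertexCover G C ∧ C.Finite ∧ Nat.card C = n}

/-- `X` is a minimum vertex cover of `G`. -/
def IsMinVertexCover {V : Type*} (G : SimpleGraph V) (X : Set V) : Prop :=
  _root_.IsVertexCover G X ∧ ∀ C : Set V, _root_.IsVertexCover G C → Nat.card X ≤ Nat.card C

/-- The rank of a graph: number of vertices minus number of connected components. -/
noncomputable def grank {V : Type*} (G : SimpleGraph V) : ℕ :=
  Nat.card V - Nat.card G.ConnectedComponent

/-- The rank of a set of vertices: the rank of the induced subgraph. -/
noncomputable def srank {V : Type*} (G : SimpleGraph V) (S : Set V) : ℕ :=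
  grank (G.induce S)

/-- The set of endpoints of a set of edges. -/
def edgeVerts {V : Type*} (F : Set (Sym2 V)) : Set V := {v | ∃ e ∈ F, v ∈ e}

/-- The setoid identifying the vertices connected through edges of `F`. -/
def contractSetoid {V : Type*} (F : Set (Sym2 V)) : Setoid V :=
  (SimpleGraph.fromEdgeSet F).reachableSetoid

/-- The graph obtained from `G` by contracting all the edges in `F`. -/
def contract {V : Type*} (G : SimpleGraph V) (F : Set (Sym2 V)) :
    SimpleGraph (Quotient (contractSetoid F)) where
  Adj a b := a ≠ b ∧ ∃ u v : V, Quotient.mk (contractSetoid F) u = a ∧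
    Quotient.mk (contractSetoid F) v = b ∧ G.Adj u v
  symm := ⟨by
    rintro a b ⟨hab, u, v, hu, hv, h⟩
    exact ⟨hab.symm, v, u, hv, hu, h.symm⟩⟩
  loopless := ⟨by rintro a ⟨h, -⟩; exact h rfl⟩


/-- The minimum size of an odd cycle transversal of `G`. -/
noncomputable def oct {V : Type*} (G : SimpleGraph V) : ℕ :=
  sInf {n | ∃ S : Set V, Nat.card S = n ∧ (G.induce (Sᶜ : Set V)).Colorable 2}

/-- The minimum number of edges whose contraction makes `G` bipartite. -/
noncomputable def bc {V : Type*} (G : SimpleGraph V) : ℕ :=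
  sInf {n | ∃ F : Set (Sym2 V), F ⊆ G.edgeSet ∧ Nat.card F = n ∧
    (contract G F).Colorable 2}


lemma reach_insert {V : Type*} {F : Set (Sym2 V)} {u v a b : V}
    (h : (SimpleGraph.fromEdgeSet (insert s(u,v) F)).Reachable a b) :
    (SimpleGraph.fromEdgeSet F).Reachable a b ∨
    ((SimpleGraph.fromEdgeSet F).Reachable a u ∧ (SimpleGraph.fromEdgeSet F).Reachable v b) ∨
    ((SimpleGraph.fromEdgeSet F).Reachable a v ∧ (SimpleGraph.fromEdgeSet F).Reachable u b) := by
  obtain ⟨p⟩ := h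
  induction p with
  | nil => exact Or.inl (Reachable.refl _)
  | @cons a x c h p ih =>
    rw [fromEdgeSet_adj] at h
    obtain ⟨hm, hne⟩ := h
    rcases Set.mem_insert_iff.mp hm with heq | hmem
    · rw [Sym2.eq_iff] at heq
      rcases heq with ⟨rfl, rfl⟩ | ⟨rfl, rfl⟩
      · rcases ih with h1 | ⟨h1, h2⟩ | ⟨h1, h2⟩
        · exact Or.inr (Or.inl ⟨Reachable.refl _, h1⟩)
        · exact Or.inr (Or.inl ⟨Reachable.refl _, h2⟩)
        · exact Or.inl h2
      · rcases ih with h1 | ⟨h1, h2⟩ | ⟨h1, h2⟩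
        · exact Or.inr (Or.inr ⟨Reachable.refl _, h1⟩)
        · exact Or.inl h2
        · exact Or.inr (Or.inr ⟨Reachable.refl _, h2⟩)
    · have hax : (SimpleGraph.fromEdgeSet F).Reachable a x :=
        Adj.reachable ((fromEdgeSet_adj _).mpr ⟨hmem, hne⟩)
      rcases ih with h1 | ⟨h1, h2⟩ | ⟨h1, h2⟩
      · exact Or.inl (hax.trans h1)
      · exact Or.inr (Or.inl ⟨hax.trans h1, h2⟩)
      · exact Or.inr (Or.inr ⟨hax.trans h1, h2⟩)

lemma exists_transversal {V : Type*} [Fintype V] (F : Set (Sym2 V)) :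
    ∃ S : Set V, Nat.card ↥S ≤ Nat.card ↥F ∧
      ∀ a b : V, a ∉ S → b ∉ S → (SimpleGraph.fromEdgeSet F).Reachable a b → a = b := by
  refine Set.Finite.induction_on F (Set.toFinite F) ?_ ?_
  ·
    refine ⟨∅, by simp, fun a b _ _ h => ?_⟩
    obtain ⟨p⟩ := h
    cases p with
    | nil => rfl
    | cons h p => simp [fromEdgeSet_adj] at h
  · rintro e F₀ he hfin ⟨S₀, hcard, hkey⟩
    induction e using Sym2.ind with
    | _ u v =>
    set R := SimpleGraph.fromEdgeSet F₀ with hRdef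
    set T : Set V := {x | R.Reachable x u ∧ x ∉ S₀} with hT
    have hTsub : T.Subsingleton := by
      intro x hx y hy
      exact hkey x y hx.2 hy.2 (hx.1.trans hy.1.symm)
    refine ⟨S₀ ∪ T, ?_, ?_⟩
    · have h1 : (S₀ ∪ T).ncard ≤ S₀.ncard + T.ncard := Set.ncard_union_le S₀ T
      have h2 : T.ncard ≤ 1 := by
        rcases hTsub.eq_empty_or_singleton with h | ⟨x, h⟩ <;> simp [h]
      have h3 : (insert s(u,v) F₀).ncard = F₀.ncard + 1 :=
        Set.ncard_insert_of_notMem he hfin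
      simp only [Nat.card_coe_set_eq] at *
      omega
    · intro a b ha hb hr
      rcases reach_insert hr with h1 | ⟨h1, h2⟩ | ⟨h1, h2⟩
      · exact hkey a b (fun h => ha (Or.inl h)) (fun h => hb (Or.inl h)) h1
      · exact absurd (Or.inr ⟨h1, fun h => ha (Or.inl h)⟩ : a ∈ S₀ ∪ T) ha
      · exact absurd (Or.inr ⟨h2.symm, fun h => hb (Or.inl h)⟩ : b ∈ S₀ ∪ T) hb


theorem stmt5 {V : Type*} [Fintype V] (G : SimpleGraph V) : oct G ≤ bc G := by
  apply le_csInf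
  · refine ⟨Nat.card ↥G.edgeSet, G.edgeSet, subset_rfl, rfl, ⟨Coloring.mk (fun _ => (0 : Fin 2)) ?_⟩⟩
    rintro a b ⟨hne, u, v, hu, hv, huv⟩ -
    apply hne
    rw [← hu, ← hv]
    exact Quotient.sound (Adj.reachable ((fromEdgeSet_adj _).mpr ⟨huv, huv.ne⟩))
  · rintro n ⟨F, hFsub, hFcard, ⟨C⟩⟩
    obtain ⟨S, hScard, hkey⟩ := exists_transversal F
    have hcol : (G.induce (Sᶜ : Set V)).Colorable 2 := by
      refine ⟨Coloring.mk (fun x => C (Quotient.mk (contractSetoid F) x.1)) ?_⟩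
      rintro ⟨a, ha⟩ ⟨b, hb⟩ hab
      have hG : G.Adj a b := hab
      have hne : Quotient.mk (contractSetoid F) a ≠ Quotient.mk (contractSetoid F) b := by
        intro h
        have hr : (SimpleGraph.fromEdgeSet F).Reachable a b := Quotient.exact h
        exact G.irrefl (hkey a b ha hb hr ▸ hG)
      exact C.valid ⟨hne, a, b, rfl, rfl, hG⟩
    calc oct G ≤ Nat.card ↥S := Nat.sInf_le ⟨S, rfl, hcol⟩
      _ ≤ n := hFcard ▸ hScard
end

section
/- For a graph G and an integer ℓ, one can make G bipartite by contracting at most ℓ edges if and only if there exists a partition (V_L, V_R) of V(G) such that rank(G[V_L]) + rank(G[V_R]) ≤ ℓ, where the rank of a graph is its number of vertices minus its number of connected components. -/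
open SimpleGraph

set_option linter.unusedSectionVars false


lemma ccCard_bot {W : Type*} : Nat.card (SimpleGraph.ConnectedComponent (⊥ : SimpleGraph W)) = Nat.card W := Eq.symm <| by
  refine Nat.card_eq_of_bijective (fun w : W => (⊥ : SimpleGraph W).connectedComponentMk w) ⟨?_, ?_⟩
  · intro a b h
    exact (SimpleGraph.reachable_bot.mp (SimpleGraph.ConnectedComponent.exact h))
  · intro c
    exact SimpleGraph.ConnectedComponent.ind (fun w => ⟨w, rfl⟩) c

lemma ccMap_surj {W : Type*} {H H' : SimpleGraph W} (h : H' ≤ H) :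
    Function.Surjective (SimpleGraph.ConnectedComponent.map (SimpleGraph.Hom.ofLE h)) := by
  intro c
  exact SimpleGraph.ConnectedComponent.ind (fun w => ⟨H'.connectedComponentMk w, rfl⟩) c

lemma ccCard_le_of_le {W : Type*} [Finite W] {H H' : SimpleGraph W} (h : H' ≤ H) :
    Nat.card (SimpleGraph.ConnectedComponent H) ≤ Nat.card (SimpleGraph.ConnectedComponent H') :=
  Nat.card_le_card_of_surjective _ (ccMap_surj h)

/-- Decomposition of reachability upon deleting one edge. -/
lemma reach_deleteEdge_cases {W : Type*} {H : SimpleGraph W} {u v : W} {a b : W}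
    (h : H.Reachable a b) :
    letI H' := H.deleteEdges {s(u,v)}
    H'.Reachable a b ∨ (H'.Reachable a u ∧ H'.Reachable v b) ∨
      (H'.Reachable a v ∧ H'.Reachable u b) := by
  set H' := H.deleteEdges {s(u,v)} with hH'
  obtain ⟨p⟩ := h
  induction p with
  | nil => exact Or.inl (Reachable.refl _)
  | @cons x y z hxy p ih =>
    by_cases he : s(x,y) = s(u,v)
    · rcases Sym2.eq_iff.mp he with ⟨hxu, hyv⟩ | ⟨hxv, hyu⟩
      · subst hxu; subst hyv
        rcases ih with h1 | ⟨h1, h2⟩ | ⟨h1, h2⟩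
        · exact Or.inr (Or.inl ⟨Reachable.refl _, h1⟩)
        · exact Or.inr (Or.inl ⟨Reachable.refl _, h2⟩)
        · exact Or.inl h2
      · subst hxv; subst hyu
        rcases ih with h1 | ⟨h1, h2⟩ | ⟨h1, h2⟩
        · exact Or.inr (Or.inr ⟨Reachable.refl _, h1⟩)
        · exact Or.inl h2
        · exact Or.inr (Or.inr ⟨Reachable.refl _, h2⟩)
    · have hxy' : H'.Adj x y := by
        simp only [H', deleteEdges_adj, Set.mem_singleton_iff]
        exact ⟨hxy, he⟩
      rcases ih with h1 | ⟨h1, h2⟩ | ⟨h1, h2⟩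
      · exact Or.inl (hxy'.reachable.trans h1)
      · exact Or.inr (Or.inl ⟨hxy'.reachable.trans h1, h2⟩)
      · exact Or.inr (Or.inr ⟨hxy'.reachable.trans h1, h2⟩)

/-- Deleting one edge: component count grows by at most 1. -/
lemma ccCard_deleteEdge_le {W : Type*} [Finite W] (H : SimpleGraph W) (u v : W) :
    Nat.card (SimpleGraph.ConnectedComponent (H.deleteEdges {s(u,v)})) ≤
      Nat.card (SimpleGraph.ConnectedComponent H) + 1 := by
  set H' := H.deleteEdges {s(u,v)} with hH'
  have hle : H' ≤ H := deleteEdges_le _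
  set φ := SimpleGraph.ConnectedComponent.map (SimpleGraph.Hom.ofLE hle) with hφ
  have key : ∀ c₁ c₂ : SimpleGraph.ConnectedComponent H', φ c₁ = φ c₂ → c₁ ≠ c₂ →
      (c₁ = H'.connectedComponentMk u ∧ c₂ = H'.connectedComponentMk v) ∨
      (c₁ = H'.connectedComponentMk v ∧ c₂ = H'.connectedComponentMk u) := by
    intro c₁ c₂
    refine SimpleGraph.ConnectedComponent.ind₂ (fun a b hab hne => ?_) c₁ c₂
    have hr : H.Reachable a b := SimpleGraph.ConnectedComponent.exact hab
    rcases reach_deleteEdge_cases (u := u) (v := v) hr with h1 | ⟨h1, h2⟩ | ⟨h1, h2⟩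
    · exact absurd (SimpleGraph.ConnectedComponent.sound h1) hne
    · exact Or.inl ⟨SimpleGraph.ConnectedComponent.sound h1,
        (SimpleGraph.ConnectedComponent.sound h2.symm)⟩
    · exact Or.inr ⟨SimpleGraph.ConnectedComponent.sound h1,
        (SimpleGraph.ConnectedComponent.sound h2.symm)⟩
  classical
  have hinj : Function.Injective (fun c : SimpleGraph.ConnectedComponent H' =>
      if c = H'.connectedComponentMk v then Sum.inr () else
        Sum.inl (φ c) : SimpleGraph.ConnectedComponent H' →
          SimpleGraph.ConnectedComponent H ⊕ Unit) := by
    intro c₁ c₂ h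
    simp only at h
    by_cases h1 : c₁ = H'.connectedComponentMk v <;>
      by_cases h2 : c₂ = H'.connectedComponentMk v
    · exact h1.trans h2.symm
    · rw [if_pos h1, if_neg h2] at h; exact absurd h (by simp)
    · rw [if_neg h1, if_pos h2] at h; exact absurd h (by simp)
    · rw [if_neg h1, if_neg h2] at h
      simp only [Sum.inl.injEq] at h
      by_contra hne
      rcases key c₁ c₂ h hne with ⟨ha, hb⟩ | ⟨ha, hb⟩
      · exact h2 hb
      · exact h1 ha
  calc Nat.card (SimpleGraph.ConnectedComponent H')
      ≤ Nat.card (SimpleGraph.ConnectedComponent H ⊕ Unit) :=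
        Nat.card_le_card_of_injective _ hinj
    _ = Nat.card (SimpleGraph.ConnectedComponent H) + 1 := by
        simp [Nat.card_sum]

/-- If reachability coincides, component counts coincide. -/
lemma ccCard_congr {W : Type*} {H H' : SimpleGraph W}
    (h : ∀ a b : W, H.Reachable a b ↔ H'.Reachable a b) :
    Nat.card (SimpleGraph.ConnectedComponent H) =
      Nat.card (SimpleGraph.ConnectedComponent H') := by
  refine Nat.card_eq_of_bijective
    (Quot.map id (fun a b hab => (h a b).mp hab)) ⟨?_, ?_⟩
  · intro c₁ c₂
    refine SimpleGraph.ConnectedComponent.ind₂ (fun a b hab => ?_) c₁ c₂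
    exact SimpleGraph.ConnectedComponent.sound
      ((h a b).mpr (SimpleGraph.ConnectedComponent.exact hab))
  · intro c
    exact SimpleGraph.ConnectedComponent.ind (fun w => ⟨H.connectedComponentMk w, rfl⟩) c

/-- Deleting an edge whose endpoints become disconnected strictly increases components. -/
lemma ccCard_lt_deleteEdge {W : Type*} [Finite W] {H : SimpleGraph W} {u v : W}
    (hadj : H.Adj u v)
    (hnr : ¬ (H.deleteEdges {s(u,v)}).Reachable u v) :
    Nat.card (SimpleGraph.ConnectedComponent H) + 1 ≤
      Nat.card (SimpleGraph.ConnectedComponent (H.deleteEdges {s(u,v)})) := by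
  classical
  set H' := H.deleteEdges {s(u,v)} with hH'
  have hle : H' ≤ H := deleteEdges_le _
  set φ : SimpleGraph.ConnectedComponent H' → SimpleGraph.ConnectedComponent H :=
    SimpleGraph.ConnectedComponent.map (SimpleGraph.Hom.ofLE hle) with hφ
  have hsurj : Function.Surjective φ := by
    intro c
    exact SimpleGraph.ConnectedComponent.ind (fun w => ⟨H'.connectedComponentMk w, rfl⟩) c
  set g := Function.surjInv hsurj with hg
  have hginj : Function.Injective g := Function.injective_surjInv hsurj
  have hgsec : ∀ c, φ (g c) = c := Function.surjInv_eq hsurj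
  -- mk u and mk v cannot both be in range of g
  have hmuv : H'.connectedComponentMk u ≠ H'.connectedComponentMk v := by
    intro h
    exact hnr (SimpleGraph.ConnectedComponent.exact h)
  have hφuv : φ (H'.connectedComponentMk u) = φ (H'.connectedComponentMk v) := by
    simp only [hφ, SimpleGraph.ConnectedComponent.map_mk]
    exact SimpleGraph.ConnectedComponent.sound hadj.reachable
  have hnotboth : H'.connectedComponentMk u ∉ Set.range g ∨
      H'.connectedComponentMk v ∉ Set.range g := by
    by_contra hc
    push_neg at hc
    obtain ⟨⟨x, hx⟩, ⟨y, hy⟩⟩ := hc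
    have : x = y := by
      rw [← hgsec x, ← hgsec y, hx, hy]
      exact hφuv
    exact hmuv (hx ▸ hy ▸ this ▸ rfl)
  obtain ⟨t, ht⟩ : ∃ t : SimpleGraph.ConnectedComponent H', t ∉ Set.range g := by
    rcases hnotboth with h | h
    · exact ⟨_, h⟩
    · exact ⟨_, h⟩
  have hinj : Function.Injective (fun x : SimpleGraph.ConnectedComponent H ⊕ Unit =>
      Sum.elim g (fun _ => t) x) := by
    rintro (c₁ | c₁) (c₂ | c₂) h <;> simp only [Sum.elim_inl, Sum.elim_inr] at h
    · rw [hginj h]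
    · exact absurd ⟨c₁, h⟩ ht
    · exact absurd ⟨c₂, h.symm⟩ ht
    · rfl
  calc Nat.card (SimpleGraph.ConnectedComponent H) + 1
      = Nat.card (SimpleGraph.ConnectedComponent H ⊕ Unit) := by simp [Nat.card_sum]
    _ ≤ Nat.card (SimpleGraph.ConnectedComponent H') :=
        Nat.card_le_card_of_injective _ hinj

section
variable {W : Type*} [Finite W]

lemma reach_iff_of_reach_del {H : SimpleGraph W} {u v : W}
    (huv : (H.deleteEdges {s(u,v)}).Reachable u v) (a b : W) :
    H.Reachable a b ↔ (H.deleteEdges {s(u,v)}).Reachable a b := by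
  constructor
  · intro h
    rcases reach_deleteEdge_cases (u := u) (v := v) h with h1 | ⟨h1, h2⟩ | ⟨h1, h2⟩
    · exact h1
    · exact (h1.trans huv).trans h2
    · exact (h1.trans huv.symm).trans h2
  · intro h
    exact h.mono (deleteEdges_le _)

lemma card_edgeSet_del_lt {H : SimpleGraph W} {u v : W} (he : s(u,v) ∈ H.edgeSet) :
    Nat.card (H.deleteEdges {s(u,v)}).edgeSet + 1 = Nat.card H.edgeSet := by
  rw [edgeSet_deleteEdges, Nat.card_coe_set_eq, Nat.card_coe_set_eq,
    Set.ncard_diff_singleton_of_mem he]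
  have : 1 ≤ H.edgeSet.ncard := by
    have : H.edgeSet.Nonempty := ⟨_, he⟩
    have := (Set.ncard_pos (Set.toFinite _)).mpr this
    omega
  omega

/-- Lemma A: rank is at most the number of edges. -/
lemma card_le_edges_add_cc (H : SimpleGraph W) :
    Nat.card W ≤ Nat.card H.edgeSet + Nat.card (SimpleGraph.ConnectedComponent H) := by
  classical
  generalize hn : Nat.card H.edgeSet = n
  induction n using Nat.strong_induction_on generalizing H with
  | _ n ih =>
    rcases eq_or_ne H ⊥ with rfl | hHne
    · rw [ccCard_bot]; omega
    · have hne : H.edgeSet.Nonempty := edgeSet_nonempty.mpr hHne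
      obtain ⟨e, he⟩ := hne
      induction e using Sym2.ind with
      | _ u v =>
        have hcard := card_edgeSet_del_lt (H := H) he
        rw [hn] at hcard
        have hlt : Nat.card (H.deleteEdges {s(u,v)}).edgeSet < n := by omega
        have h1 := ih _ hlt (H.deleteEdges {s(u,v)}) rfl
        have h2 := ccCard_deleteEdge_le H u v
        omega

/-- Lemma B: existence of a "spanning forest" edge set. -/
lemma exists_spanning_forest (H : SimpleGraph W) :
    ∃ F : Set (Sym2 W), F ⊆ H.edgeSet ∧
      Nat.card F + Nat.card (SimpleGraph.ConnectedComponent H) ≤ Nat.card W ∧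
      ∀ a b : W, H.Reachable a b → (SimpleGraph.fromEdgeSet F).Reachable a b := by
  classical
  generalize hn : Nat.card H.edgeSet = n
  induction n using Nat.strong_induction_on generalizing H with
  | _ n ih =>
    rcases eq_or_ne H ⊥ with rfl | hHne
    · refine ⟨∅, by simp, ?_, ?_⟩
      · rw [ccCard_bot]; simp
      · intro a b hab
        rw [reachable_bot.mp hab]
    · obtain ⟨e, he⟩ := edgeSet_nonempty.mpr hHne
      induction e using Sym2.ind with
      | _ u v =>
        have hadj : H.Adj u v := (SimpleGraph.mem_edgeSet H).mp he
        have hcard := card_edgeSet_del_lt (H := H) he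
        rw [hn] at hcard
        have hlt : Nat.card (H.deleteEdges {s(u,v)}).edgeSet < n := by omega
        obtain ⟨F', hF'sub, hF'card, hF'reach⟩ := ih _ hlt (H.deleteEdges {s(u,v)}) rfl
        have hsubH : F' ⊆ H.edgeSet := by
          intro x hx
          exact ((edgeSet_deleteEdges _ ▸ hF'sub) hx).1
        by_cases huv : (H.deleteEdges {s(u,v)}).Reachable u v
        · refine ⟨F', hsubH, ?_, ?_⟩
          · rwa [ccCard_congr (reach_iff_of_reach_del huv)]
          · intro a b hab
            exact hF'reach a b ((reach_iff_of_reach_del huv a b).mp hab)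
        · refine ⟨insert s(u,v) F', ?_, ?_, ?_⟩
          · exact Set.insert_subset he hsubH
          · have h1 : Nat.card (insert s(u,v) F' : Set (Sym2 W)) ≤ Nat.card F' + 1 := by
              rw [Nat.card_coe_set_eq, Nat.card_coe_set_eq]
              exact Set.ncard_insert_le _ _
            have h2 := ccCard_lt_deleteEdge hadj huv
            omega
          · have hedge : (SimpleGraph.fromEdgeSet (insert s(u,v) F')).Reachable u v := by
              refine SimpleGraph.Adj.reachable ?_
              rw [fromEdgeSet_adj]
              exact ⟨Set.mem_insert _ _, hadj.ne⟩
            have hmono : SimpleGraph.fromEdgeSet F' ≤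
                SimpleGraph.fromEdgeSet (insert s(u,v) F') :=
              fromEdgeSet_mono (Set.subset_insert _ _)
            intro a b hab
            rcases reach_deleteEdge_cases (u := u) (v := v) hab with h1 | ⟨h1, h2⟩ | ⟨h1, h2⟩
            · exact ((hF'reach a b h1).mono hmono)
            · exact (((hF'reach a u h1).mono hmono).trans hedge).trans
                ((hF'reach v b h2).mono hmono)
            · exact (((hF'reach a v h1).mono hmono).trans hedge.symm).trans
                ((hF'reach u b h2).mono hmono)
end



/-- Lift reachability into an induced subgraph on a closed set. -/
lemma reach_induce_of_closed {V : Type*} {G : SimpleGraph V} {S : Set V}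
    (hcl : ∀ a b : V, a ∈ S → G.Adj a b → b ∈ S) {a b : V} (ha : a ∈ S) (hb : b ∈ S)
    (h : G.Reachable a b) : (G.induce S).Reachable ⟨a, ha⟩ ⟨b, hb⟩ := by
  obtain ⟨p⟩ := h
  induction p with
  | nil => exact Reachable.refl _
  | @cons x y z hxy p ih =>
    have hy : y ∈ S := hcl x y ha hxy
    have hadj : (G.induce S).Adj ⟨x, ha⟩ ⟨y, hy⟩ := by
      simpa using hxy
    exact hadj.reachable.trans (ih hy hb)


lemma srank_le_side {V : Type*} [Fintype V] (G : SimpleGraph V) (F : Set (Sym2 V)) (S : Set V)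
    (hF : F ⊆ G.edgeSet)
    (hadj : ∀ a b : V, a ∈ S → b ∈ S → G.Adj a b → (SimpleGraph.fromEdgeSet F).Reachable a b)
    (hcl : ∀ a b : V, a ∈ S → (SimpleGraph.fromEdgeSet F).Adj a b → b ∈ S) :
    srank G S ≤ Nat.card {e : Sym2 V | e ∈ F ∧ ∀ v ∈ e, v ∈ S} := by
  classical
  set H1 := (SimpleGraph.fromEdgeSet F).induce S with hH1
  have hFG : SimpleGraph.fromEdgeSet F ≤ G := by
    intro a b hab
    rw [fromEdgeSet_adj] at hab
    exact (SimpleGraph.mem_edgeSet G).mp (hF hab.1)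
  have hle : H1 ≤ G.induce S := by
    intro a b hab
    simp only [comap_adj, Function.Embedding.coe_subtype] at hab ⊢
    exact hFG hab
  have hreach : ∀ a b : S, (G.induce S).Reachable a b ↔ H1.Reachable a b := by
    intro a b
    constructor
    · intro h
      obtain ⟨p⟩ := h
      induction p with
      | nil => exact Reachable.refl _
      | @cons x y z hxy p ih =>
        have hxy' : G.Adj x.val y.val := by simpa using hxy
        have hr : (SimpleGraph.fromEdgeSet F).Reachable x.val y.val :=
          hadj x.val y.val x.prop y.prop hxy'
        have := reach_induce_of_closed hcl x.prop y.prop hr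
        exact (this.trans ih)
    · intro h
      exact h.mono hle
  have hcc : Nat.card (SimpleGraph.ConnectedComponent (G.induce S)) =
      Nat.card (SimpleGraph.ConnectedComponent H1) := ccCard_congr hreach
  have hA := card_le_edges_add_cc H1
  have hedge : Nat.card H1.edgeSet ≤ Nat.card {e : Sym2 V | e ∈ F ∧ ∀ v ∈ e, v ∈ S} := by
    refine Nat.card_le_card_of_injective
      (fun e => ⟨Sym2.map Subtype.val e.val, ?_⟩) ?_
    · obtain ⟨e, he⟩ := e
      induction e using Sym2.ind with
      | _ x y =>
        rw [SimpleGraph.mem_edgeSet] at he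
        have : (SimpleGraph.fromEdgeSet F).Adj x.val y.val := by simpa [hH1] using he
        rw [fromEdgeSet_adj] at this
        refine ⟨this.1, ?_⟩
        intro w hw
        rcases Sym2.mem_iff.mp (by simpa using hw) with h | h
        · exact h ▸ x.prop
        · exact h ▸ y.prop
    · intro e₁ e₂ h
      simp only [Subtype.mk.injEq] at h
      exact Subtype.ext (Sym2.map.injective Subtype.val_injective h)
  have : srank G S = Nat.card S - Nat.card (SimpleGraph.ConnectedComponent (G.induce S)) := rfl
  rw [this, hcc]
  omega


theorem stmt6 {V : Type*} [Fintype V] (G : SimpleGraph V) (l : ℕ) :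
    (∃ F : Set (Sym2 V), F ⊆ G.edgeSet ∧ Nat.card F ≤ l ∧
      (contract G F).Colorable 2) ↔
    ∃ VL : Set V, srank G VL + srank G (VLᶜ) ≤ l := by
  classical
  constructor
  · rintro ⟨F, hF, hcard, ⟨C⟩⟩
    set q : V → Quotient (contractSetoid F) := Quotient.mk (contractSetoid F) with hq
    have hqr : ∀ a b : V, (SimpleGraph.fromEdgeSet F).Reachable a b → q a = q b :=
      fun a b h => Quotient.sound h
    have hqe : ∀ a b : V, q a = q b → (SimpleGraph.fromEdgeSet F).Reachable a b :=
      fun a b h => Quotient.exact h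
    set S : Set V := {v | C (q v) = 0} with hS
    have hfin2 : ∀ x : Fin 2, x ≠ 0 → x = 1 := by decide
    -- same color implies reachable
    have hadjS : ∀ T : Set V, (∀ a b : V, a ∈ T → b ∈ T → C (q a) = C (q b)) →
        ∀ a b : V, a ∈ T → b ∈ T → G.Adj a b → (SimpleGraph.fromEdgeSet F).Reachable a b := by
      intro T hsame a b ha hb hGab
      by_contra hnr
      have hne : q a ≠ q b := fun h => hnr (hqe a b h)
      have : (contract G F).Adj (q a) (q b) := ⟨hne, a, b, rfl, rfl, hGab⟩
      exact (C.valid this) (hsame a b ha hb)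
    have hclS : ∀ T : Set V, (∀ a b : V, a ∈ T → C (q a) = C (q b) → b ∈ T) →
        ∀ a b : V, a ∈ T → (SimpleGraph.fromEdgeSet F).Adj a b → b ∈ T := by
      intro T hT a b ha hab
      exact hT a b ha (congrArg C (hqr a b hab.reachable))
    have h1 := srank_le_side G F S hF
      (hadjS S (fun a b ha hb => by rw [ha, hb]))
      (hclS S (fun a b ha hab => by rw [hS, Set.mem_setOf_eq, ← hab, ha]))
    have h2 := srank_le_side G F Sᶜ hF
      (hadjS Sᶜ (fun a b ha hb => by
        rw [hfin2 _ ha, hfin2 _ hb]))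
      (hclS Sᶜ (fun a b ha hab hb => ha (show C (q a) = 0 from hab.trans hb)))
    refine ⟨S, ?_⟩
    have hdisj : Disjoint {e : Sym2 V | e ∈ F ∧ ∀ v ∈ e, v ∈ S}
        {e : Sym2 V | e ∈ F ∧ ∀ v ∈ e, v ∈ Sᶜ} := by
      rw [Set.disjoint_left]
      rintro e ⟨-, h1'⟩ ⟨-, h2'⟩
      induction e using Sym2.ind with
      | _ x y =>
        exact (h2' x (Sym2.mem_mk_left x y)) (h1' x (Sym2.mem_mk_left x y))
    have hsub : {e : Sym2 V | e ∈ F ∧ ∀ v ∈ e, v ∈ S} ∪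
        {e : Sym2 V | e ∈ F ∧ ∀ v ∈ e, v ∈ Sᶜ} ⊆ F := by
      rintro e (⟨he, -⟩ | ⟨he, -⟩) <;> exact he
    have hcards : Nat.card {e : Sym2 V | e ∈ F ∧ ∀ v ∈ e, v ∈ S} +
        Nat.card {e : Sym2 V | e ∈ F ∧ ∀ v ∈ e, v ∈ Sᶜ} ≤ Nat.card F := by
      rw [Nat.card_coe_set_eq, Nat.card_coe_set_eq, Nat.card_coe_set_eq,
        ← Set.ncard_union_eq hdisj (Set.toFinite _) (Set.toFinite _)]
      exact Set.ncard_le_ncard hsub (Set.toFinite _)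
    omega
  · rintro ⟨S, hl⟩
    obtain ⟨FS, hFSsub, hFScard, hFSreach⟩ := exists_spanning_forest (G.induce S)
    obtain ⟨FT, hFTsub, hFTcard, hFTreach⟩ := exists_spanning_forest (G.induce Sᶜ)
    set F : Set (Sym2 V) := Sym2.map Subtype.val '' FS ∪ Sym2.map Subtype.val '' FT with hFdef
    have himgsub : ∀ (T : Set V) (FX : Set (Sym2 T)), FX ⊆ (G.induce T).edgeSet →
        Sym2.map Subtype.val '' FX ⊆ G.edgeSet := by
      rintro T FX hsub e ⟨e', he', rfl⟩
      induction e' using Sym2.ind with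
      | _ x y =>
        have := hsub he'
        rw [Sym2.map_pair_eq, SimpleGraph.mem_edgeSet]
        simpa using this
    have hFsub : F ⊆ G.edgeSet :=
      Set.union_subset (himgsub S FS hFSsub) (himgsub Sᶜ FT hFTsub)
    -- each edge of F lies within S or within Sᶜ
    have hsides : ∀ e ∈ F, (∀ v ∈ e, v ∈ S) ∨ (∀ v ∈ e, v ∈ Sᶜ) := by
      rintro e (⟨e', he', rfl⟩ | ⟨e', he', rfl⟩)
      · left
        induction e' using Sym2.ind with
        | _ x y =>
          intro w hw
          rcases Sym2.mem_iff.mp (by simpa using hw) with h | h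
          · exact h ▸ x.prop
          · exact h ▸ y.prop
      · right
        induction e' using Sym2.ind with
        | _ x y =>
          intro w hw
          rcases Sym2.mem_iff.mp (by simpa using hw) with h | h
          · exact h ▸ x.prop
          · exact h ▸ y.prop
    have hsidemem : ∀ a b : V, (SimpleGraph.fromEdgeSet F).Reachable a b → (a ∈ S ↔ b ∈ S) := by
      intro a b h
      obtain ⟨p⟩ := h
      induction p with
      | nil => exact Iff.rfl
      | @cons x y z hxy p ih =>
        refine Iff.trans ?_ ih
        rw [fromEdgeSet_adj] at hxy
        rcases hsides _ hxy.1 with h | h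
        · simp [h x (Sym2.mem_mk_left x y), h y (Sym2.mem_mk_right x y)]
        · have hx := h x (Sym2.mem_mk_left x y)
          have hy := h y (Sym2.mem_mk_right x y)
          simp only [Set.mem_compl_iff] at hx hy
          simp [hx, hy]
    -- the coloring
    have hwd : ∀ a b : V, (contractSetoid F).r a b →
        (if a ∈ S then (0 : Fin 2) else 1) = (if b ∈ S then (0 : Fin 2) else 1) := by
      intro a b h
      have : a ∈ S ↔ b ∈ S := hsidemem a b h
      by_cases ha : a ∈ S
      · rw [if_pos ha, if_pos (this.mp ha)]
      · rw [if_neg ha, if_neg (fun hb => ha (this.mpr hb))]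
    -- reachability in subgraph pushes to fromEdgeSet F
    have hpush : ∀ (T : Set V) (FX : Set (Sym2 T)), Sym2.map Subtype.val '' FX ⊆ F →
        ∀ a b : T, (SimpleGraph.fromEdgeSet FX).Reachable a b →
          (SimpleGraph.fromEdgeSet F).Reachable a.val b.val := by
      intro T FX hsub a b h
      refine Reachable.map (⟨Subtype.val, ?_⟩ : SimpleGraph.fromEdgeSet FX →g SimpleGraph.fromEdgeSet F) h
      intro x y hxy
      rw [fromEdgeSet_adj] at hxy ⊢
      refine ⟨hsub ⟨s(x, y), hxy.1, by rw [Sym2.map_pair_eq]⟩, ?_⟩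
      exact fun hc => hxy.2 (Subtype.ext hc)
    refine ⟨F, hFsub, ?_, ?_⟩
    · have himgcard : ∀ (T : Set V) (FX : Set (Sym2 T)),
          (Sym2.map Subtype.val '' FX).ncard ≤ Nat.card FX := by
        intro T FX
        rw [Nat.card_coe_set_eq]
        exact Set.ncard_image_le (Set.toFinite _)
      have hu : Nat.card F ≤ Nat.card FS + Nat.card FT := by
        rw [Nat.card_coe_set_eq, hFdef]
        calc (Sym2.map Subtype.val '' FS ∪ Sym2.map Subtype.val '' FT).ncard
            ≤ (Sym2.map Subtype.val '' FS).ncard + (Sym2.map Subtype.val '' FT).ncard :=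
              Set.ncard_union_le _ _
          _ ≤ Nat.card FS + Nat.card FT := add_le_add (himgcard _ _) (himgcard _ _)
      have hsrS : Nat.card FS ≤ srank G S := by
        have : srank G S = Nat.card S - Nat.card (SimpleGraph.ConnectedComponent (G.induce S)) :=
          rfl
        omega
      have hsrT : Nat.card FT ≤ srank G Sᶜ := by
        have : srank G Sᶜ = Nat.card (Sᶜ : Set V) -
            Nat.card (SimpleGraph.ConnectedComponent (G.induce Sᶜ)) := rfl
        omega
      omega
    · refine ⟨SimpleGraph.Coloring.mk
        (Quotient.lift (fun v => if v ∈ S then (0 : Fin 2) else 1) hwd) ?_⟩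
      rintro a b ⟨hne, x, y, rfl, rfl, hGxy⟩ heq
      simp only [Quotient.lift_mk] at heq
      have hxy : x ∈ S ↔ y ∈ S := by
        by_cases hx : x ∈ S <;> by_cases hy : y ∈ S <;>
          simp [hx, hy] at heq ⊢
      have hxyne : x ≠ y := fun h => hne (by rw [h])
      have hreach : (SimpleGraph.fromEdgeSet F).Reachable x y := by
        by_cases hx : x ∈ S
        · have hy := hxy.mp hx
          have : (G.induce S).Adj ⟨x, hx⟩ ⟨y, hy⟩ := by simpa [hxyne] using hGxy
          exact hpush S FS Set.subset_union_left ⟨x, hx⟩ ⟨y, hy⟩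
            (hFSreach _ _ this.reachable)
        · have hy : y ∈ Sᶜ := fun hy => hx (hxy.mpr hy)
          have : (G.induce Sᶜ).Adj ⟨x, hx⟩ ⟨y, hy⟩ := by simpa [hxyne] using hGxy
          exact hpush Sᶜ FT Set.subset_union_right ⟨x, hx⟩ ⟨y, hy⟩
            (hFTreach _ _ this.reachable)
      exact hne (Quotient.sound hreach)
end

section
/- In the reduction graph for the W[1]-hardness proof: given a graph G, construct G' by adding a universal vertex α adjacent to all vertices of G, plus q+1 new pendant vertices x_1,…,x_{q+1} each adjacent only to α. Then for any set F of edges of G' with G'[V(F)] a forest and |F| ≥ 2q+1 (where V(G) is partitioned into q cliques V_1,…,V_q), the vertex α belongs to V(F). -/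
open SimpleGraph

/-- The graph `G'` of the W[1]-hardness reduction: `G` plus a universal vertex `α`
(the `Sum.inr (Sum.inl ())` vertex) and `q + 1` pendant vertices adjacent only to `α`. -/
def Gp {V : Type*} (G : SimpleGraph V) (q : ℕ) :
    SimpleGraph (V ⊕ (Unit ⊕ Fin (q + 1))) :=
  SimpleGraph.fromRel (fun a b =>
    match a, b with
    | .inl u, .inl v => G.Adj u v
    | .inl _, .inr (.inl _) => True
    | .inr (.inl _), .inr (.inr _) => True
    | _, _ => False)


/-- In a finite acyclic graph, any nonempty set of edges has a "leaf edge":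
an edge with an endpoint not in any other edge of the set. -/
lemma exists_leaf_edge {W : Type*} [Finite W] {G : SimpleGraph W} (hG : G.IsAcyclic)
    {F : Set (Sym2 W)} (hF : F ⊆ G.edgeSet) (hne : F.Nonempty) :
    ∃ (u : W) (e : Sym2 W), e ∈ F ∧ u ∈ e ∧ ∀ f ∈ F, u ∈ f → f = e := by
  classical
  let H := fromEdgeSet F
  have hHG : H ≤ G := by
    have := fromEdgeSet_mono hF
    rwa [fromEdgeSet_edgeSet] at this
  have hH : H.IsAcyclic := fun v c hc => hG _ (hc.mapLe hHG)
  have : Fintype W := Fintype.ofFinite W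
  -- a path of length 1
  obtain ⟨e₀, he₀⟩ := hne
  induction e₀ using Sym2.ind with
  | _ u₀ v₀ =>
  have hadj₀ : H.Adj u₀ v₀ := (fromEdgeSet_adj F).mpr ⟨he₀, (G.mem_edgeSet.mp (hF he₀)).ne⟩
  set P : ℕ → Prop := fun n => ∃ (u v : W) (p : H.Walk u v), p.IsPath ∧ p.length = n with hP
  have hP1 : P 1 := ⟨u₀, v₀, Walk.cons hadj₀ Walk.nil,
    by simp [Walk.cons_isPath_iff, hadj₀.ne], by simp⟩
  have : Nonempty W := ⟨u₀⟩
  have hb : 1 ≤ Fintype.card W := Fintype.card_pos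
  set n := Nat.findGreatest P (Fintype.card W) with hndef
  have hn : P n := Nat.findGreatest_spec hb hP1
  have hn1 : 1 ≤ n := Nat.le_findGreatest hb hP1
  obtain ⟨u, v, p, hp, hlen⟩ := hn
  cases p with
  | nil => simp at hlen; omega
  | @cons _ w₂ _ h q =>
    rw [Walk.length_cons] at hlen
    rw [Walk.cons_isPath_iff] at hp
    obtain ⟨hq, hus⟩ := hp
    have hmain : ∀ f ∈ F, u ∈ f → f = s(u, w₂) := by
      -- first: any H-neighbor x of u with x ≠ w₂ leads to contradiction
      have key : ∀ x : W, H.Adj u x → x = w₂ := by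
        intro x hux
        by_contra hxw
        by_cases hxs : x ∈ (Walk.cons h q).support
        · -- cycle
          have hsux : s(u, x) ∉ (Walk.cons h q).edges := by
            intro hmem
            rw [Walk.edges_cons] at hmem
            rcases List.mem_cons.mp hmem with h1 | h2
            · exact hxw (Sym2.congr_right.mp h1)
            · exact hus (Walk.fst_mem_support_of_mem_edges q h2)
          set w := (Walk.cons h q).takeUntil x hxs with hw
          have hwp : w.IsPath := ((Walk.cons_isPath_iff _ _).mpr ⟨hq, hus⟩).takeUntil hxs
          have hxe : s(x, u) ∉ w.edges := by
            intro hc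
            rw [Sym2.eq_swap] at hc
            exact hsux (Walk.edges_takeUntil_subset _ hxs hc)
          exact hH _ (SimpleGraph.Path.cons_isCycle ⟨w, hwp⟩ hux.symm hxe)
        · -- longer path
          have hlp : (Walk.cons hux.symm (Walk.cons h q)).IsPath :=
            (Walk.cons_isPath_iff _ _).mpr ⟨(Walk.cons_isPath_iff _ _).mpr ⟨hq, hus⟩, hxs⟩
          have hlt : n + 1 ≤ Fintype.card W := by
            have := hlp.length_lt
            simp only [Walk.length_cons] at this
            omega
          exact Nat.findGreatest_is_greatest (P := P) (by rw [← hndef]; omega) hlt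
            ⟨_, _, _, hlp, by simp only [Walk.length_cons]; omega⟩
      intro f hf huf
      induction f using Sym2.ind with
      | _ a b =>
        have hab : a ≠ b := (G.mem_edgeSet.mp (hF hf)).ne
        rcases Sym2.mem_iff.mp huf with rfl | rfl
        · have : H.Adj u b := (fromEdgeSet_adj F).mpr ⟨hf, hab⟩
          rw [key b this]
        · have : H.Adj u a := (fromEdgeSet_adj F).mpr ⟨by rwa [Sym2.eq_swap], hab.symm⟩
          rw [key a this, Sym2.eq_swap]
    refine ⟨u, s(u, w₂), ?_, Sym2.mem_mk_left u w₂, hmain⟩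
    have : s(u, w₂) ∈ H.edgeSet := (Walk.cons h q).edges_subset_edgeSet (by simp)
    rw [edgeSet_fromEdgeSet] at this
    exact this.1

/-- Forest edge bound: in a finite acyclic graph, a set of edges has at most as
many elements as endpoints. -/
lemma forest_bound' {W : Type*} [Finite W] {G : SimpleGraph W} (hG : G.IsAcyclic) :
    ∀ (n : ℕ) (F : Set (Sym2 W)), F.ncard = n → F ⊆ G.edgeSet → F.ncard ≤ (edgeVerts F).ncard := by
  classical
  intro n
  induction n with
  | zero => intro F hn _; omega
  | succ n ih =>
    intro F hn hF
    have hfin : F.Finite := Set.toFinite F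
    have hne : F.Nonempty := by
      rw [← Set.ncard_pos hfin]; omega
    obtain ⟨u, e, heF, hue, hleaf⟩ := exists_leaf_edge hG hF hne
    set F' := F \ {e} with hF'
    have hF'sub : F' ⊆ G.edgeSet := (Set.diff_subset).trans hF
    have hF'card : F'.ncard = n := by
      rw [hF', Set.ncard_diff_singleton_of_mem heF]; omega
    have hIH := ih F' hF'card hF'sub
    have huF : u ∈ edgeVerts F := ⟨e, heF, hue⟩
    have huF' : u ∉ edgeVerts F' := by
      rintro ⟨f, hf, huf⟩
      exact hf.2 (hleaf f hf.1 huf)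
    have hsub : insert u (edgeVerts F') ⊆ edgeVerts F := by
      rintro x (rfl | ⟨f, hf, hxf⟩)
      · exact huF
      · exact ⟨f, hf.1, hxf⟩
    have := Set.ncard_le_ncard hsub (Set.toFinite _)
    rw [Set.ncard_insert_of_notMem huF' (Set.toFinite _)] at this
    omega

theorem stmt11 {V : Type*} [Fintype V] (G : SimpleGraph V) (q : ℕ)
    (P : V → Fin q) (hclique : ∀ u v : V, P u = P v → u ≠ v → G.Adj u v)
    (F : Set (Sym2 (V ⊕ (Unit ⊕ Fin (q + 1)))))
    (hFE : F ⊆ (Gp G q).edgeSet)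
    (hforest : ((Gp G q).induce (edgeVerts F)).IsAcyclic)
    (hcard : 2 * q + 1 ≤ Nat.card F) :
    (Sum.inr (Sum.inl ()) : V ⊕ (Unit ⊕ Fin (q + 1))) ∈ edgeVerts F := by
  classical
  have hGp : Gp G q = SimpleGraph.fromRel (fun a b =>
      match a, b with
      | .inl u, .inl v => G.Adj u v
      | .inl _, .inr (.inl _) => True
      | .inr (.inl _), .inr (.inr _) => True
      | _, _ => False) := rfl
  by_contra hα
  -- Step 1: all endpoints of edges in F are `inl`
  have hstep1 : ∀ e ∈ F, ∃ a b : V, a ≠ b ∧ e = s(Sum.inl a, Sum.inl b) := by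
    intro e he
    have hedge := hFE he
    induction e using Sym2.ind with
    | _ x y =>
      rw [SimpleGraph.mem_edgeSet, hGp, SimpleGraph.fromRel_adj] at hedge
      obtain ⟨hxy, hrel⟩ := hedge
      have hxA : x ≠ Sum.inr (Sum.inl ()) := by
        rintro rfl; exact hα ⟨_, he, Sym2.mem_mk_left _ _⟩
      have hyA : y ≠ Sum.inr (Sum.inl ()) := by
        rintro rfl; exact hα ⟨_, he, Sym2.mem_mk_right _ _⟩
      rcases x with a | u | i
      · rcases y with b | u | i
        · exact ⟨a, b, fun h => hxy (by rw [h]), rfl⟩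
        · exact absurd rfl (by cases u; exact hyA)
        · simp at hrel
      · exact absurd rfl (by cases u; exact hxA)
      · rcases y with b | u | j
        · simp at hrel
        · exact absurd rfl (by cases u; exact hyA)
        · simp at hrel
  -- the set of G-vertices appearing in F
  set S : Set V := {v : V | Sum.inl v ∈ edgeVerts F} with hSdef
  have hEV : edgeVerts F ⊆ Sum.inl '' S := by
    rintro x ⟨e, he, hx⟩
    obtain ⟨a, b, hab, rfl⟩ := hstep1 e he
    rcases Sym2.mem_iff.mp hx with rfl | rfl
    · exact ⟨a, ⟨_, he, Sym2.mem_mk_left _ _⟩, rfl⟩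
    · exact ⟨b, ⟨_, he, Sym2.mem_mk_right _ _⟩, rfl⟩
  -- adjacency helper
  have hGpadj : ∀ x y : V, G.Adj x y → (Gp G q).Adj (Sum.inl x) (Sum.inl y) := by
    intro x y h
    rw [hGp, SimpleGraph.fromRel_adj]
    exact ⟨by simp [h.ne], Or.inl h⟩
  -- fibers of P on S have at most 2 elements
  set Sf := (Set.toFinite S).toFinset with hSf
  have hfiber : ∀ i : Fin q, (Sf.filter (fun v => P v = i)).card ≤ 2 := by
    intro i
    by_contra hgt
    push_neg at hgt
    obtain ⟨u, hu, v, hv, w, hw, huv, huw, hvw⟩ := Finset.two_lt_card.mp hgt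
    simp only [Finset.mem_filter, hSf, Set.Finite.mem_toFinset] at hu hv hw
    have hPuv : P u = P v := by rw [hu.2, hv.2]
    have hPvw : P v = P w := by rw [hv.2, hw.2]
    have hPwu : P w = P u := by rw [hw.2, hu.2]
    set J := (Gp G q).induce (edgeVerts F) with hJ
    have mkadj : ∀ (x y : V) (hx : Sum.inl x ∈ edgeVerts F) (hy : Sum.inl y ∈ edgeVerts F),
        G.Adj x y → J.Adj ⟨Sum.inl x, hx⟩ ⟨Sum.inl y, hy⟩ := by
      intro x y hx hy h
      exact hGpadj x y h
    have hab := mkadj u v hu.1 hv.1 (hclique u v hPuv huv)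
    have hbc := mkadj v w hv.1 hw.1 (hclique v w hPvw hvw)
    have hca := mkadj w u hw.1 hu.1 (hclique w u hPwu huw.symm)
    set c : J.Walk ⟨Sum.inl u, hu.1⟩ ⟨Sum.inl u, hu.1⟩ :=
      Walk.cons hab (Walk.cons hbc (Walk.cons hca Walk.nil)) with hc
    have hcyc : c.IsCycle := by
      rw [Walk.isCycle_def]
      refine ⟨⟨?_⟩, by simp [hc], ?_⟩
      · simp [hc, Walk.edges_cons, List.nodup_cons, Sym2.eq_iff, Subtype.ext_iff, huv, huw, hvw,
          huv.symm, huw.symm, hvw.symm]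
      · simp [hc, Walk.support_cons, List.nodup_cons, Subtype.ext_iff, huv, huw, hvw,
          huv.symm, huw.symm, hvw.symm]
    exact hforest c hcyc
  -- |S| ≤ 2q
  have hScard : Sf.card ≤ 2 * q := by
    rw [Finset.card_eq_sum_card_fiberwise (f := P) (t := Finset.univ) (fun x _ => Finset.mem_univ _)]
    calc ∑ i ∈ Finset.univ, (Sf.filter (fun v => P v = i)).card
        ≤ ∑ _i ∈ (Finset.univ : Finset (Fin q)), 2 := Finset.sum_le_sum (fun i _ => hfiber i)
      _ = 2 * q := by simp [mul_comm]
  have hEVcard : (edgeVerts F).ncard ≤ 2 * q := by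
    calc (edgeVerts F).ncard ≤ (Sum.inl '' S).ncard :=
          Set.ncard_le_ncard hEV (Set.toFinite _)
      _ = S.ncard := Set.ncard_image_of_injective _ Sum.inl_injective
      _ = Sf.card := Set.ncard_eq_toFinset_card S (Set.toFinite S)
      _ ≤ 2 * q := hScard
  -- forest bound
  set T := ↥(edgeVerts F)
  set Fh : Set (Sym2 T) := {e : Sym2 T | Sym2.map Subtype.val e ∈ F} with hFh
  have hFhsub : Fh ⊆ ((Gp G q).induce (edgeVerts F)).edgeSet := by
    intro e he
    induction e using Sym2.ind with
    | _ x y =>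
      simp only [hFh, Set.mem_setOf_eq, Sym2.map_pair_eq] at he
      have := hFE he
      rw [SimpleGraph.mem_edgeSet] at this ⊢
      exact this
  have himg : Sym2.map (Subtype.val : T → _) '' Fh = F := by
    apply Set.Subset.antisymm
    · rintro e ⟨f, hf, rfl⟩; exact hf
    · intro e he
      induction e using Sym2.ind with
      | _ x y =>
        refine ⟨s(⟨x, ⟨_, he, Sym2.mem_mk_left _ _⟩⟩, ⟨y, ⟨_, he, Sym2.mem_mk_right _ _⟩⟩), ?_, ?_⟩
        · simp only [hFh, Set.mem_setOf_eq, Sym2.map_pair_eq]; exact he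
        · simp
  have hFcard : F.ncard = Fh.ncard := by
    rw [← himg, Set.ncard_image_of_injective _ (Sym2.map.injective Subtype.val_injective)]
  have hbound := forest_bound' hforest Fh.ncard Fh rfl hFhsub
  have h1 : (edgeVerts Fh).ncard ≤ (edgeVerts F).ncard := by
    calc (edgeVerts Fh).ncard ≤ (Set.univ : Set T).ncard :=
          Set.ncard_le_ncard (Set.subset_univ _) (Set.toFinite _)
      _ = Nat.card T := Set.ncard_univ _
      _ = (edgeVerts F).ncard := Nat.card_coe_set_eq _
  have h2 : Nat.card F = F.ncard := Nat.card_coe_set_eq _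
  omega
end

section
/- Let G be a graph, X a minimum vertex cover of G with X also an independent set (so G is bipartite with parts X and Y = V(G)\X), let M be a matching saturating X, and let k = d. If ⟨V_L, V_R⟩ is a partition of V(G) with E(V_L ∩ Y, V_R ∩ X) = ∅ and |V_R ∩ Y| − |V_R ∩ X| ≤ 0, then Y ∩ V_R consists exactly of the M-partners of the vertices in X ∩ V_R; in particular |Y ∩ V_R| = |X ∩ V_R| and every vertex of Y ∩ V_R is matched by M to a vertex of X ∩ V_R. -/
open SimpleGraph

theorem stmt13 {V : Type*} [Fintype V] (G : SimpleGraph V) (X : Set V)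
    (hX : IsMinVertexCover G X)
    (hXind : ∀ u ∈ X, ∀ v ∈ X, ¬ G.Adj u v)
    (M : G.Subgraph) (hM : M.IsMatching) (hsat : X ⊆ M.verts)
    (VR : Set V)
    (hcross : ∀ y ∈ (Xᶜ : Set V), y ∉ VR → ∀ x ∈ X ∩ VR, ¬ G.Adj y x)
    (hbal : Nat.card ↥((Xᶜ : Set V) ∩ VR) ≤ Nat.card ↥(X ∩ VR)) :
    ((Xᶜ : Set V) ∩ VR) = {y | ∃ x ∈ X ∩ VR, M.Adj x y} ∧
    Nat.card ↥((Xᶜ : Set V) ∩ VR) = Nat.card ↥(X ∩ VR) ∧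
    ∀ y ∈ ((Xᶜ : Set V) ∩ VR), ∃ x ∈ X ∩ VR, M.Adj x y := by
  classical
  set S : Set V := {y | ∃ x ∈ X ∩ VR, M.Adj x y} with hS
  -- partner function
  have hpart : ∀ x ∈ M.verts, ∃! w, M.Adj x w := hM
  set p : V → V := fun x => if h : x ∈ M.verts then (hM h).choose else x with hp
  have hpadj : ∀ x ∈ M.verts, M.Adj x (p x) := by
    intro x hx
    simp only [hp, dif_pos hx]
    exact (hM hx).choose_spec.1
  have huniq : ∀ x ∈ M.verts, ∀ w, M.Adj x w → w = p x := by
    intro x hx w hw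
    simp only [hp, dif_pos hx]
    exact (hM hx).choose_spec.2 w hw
  have himg : S = p '' (X ∩ VR) := by
    ext y
    constructor
    · rintro ⟨x, hx, hxy⟩
      exact ⟨x, hx, (huniq x (hsat hx.1) y hxy).symm⟩
    · rintro ⟨x, hx, rfl⟩
      exact ⟨x, hx, hpadj x (hsat hx.1)⟩
  have hinj : Set.InjOn p (X ∩ VR) := by
    intro a ha b hb hab
    have h1 := hpadj a (hsat ha.1)
    have h2 := hpadj b (hsat hb.1)
    rw [hab] at h1
    have hpb : p b ∈ M.verts := h2.snd_mem
    have e1 := huniq (p b) hpb a h1.symm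
    have e2 := huniq (p b) hpb b h2.symm
    exact e1.trans e2.symm
  have hcardS : S.ncard = (X ∩ VR).ncard := by
    rw [himg, Set.ncard_image_of_injOn hinj]
  have hsub : S ⊆ (Xᶜ : Set V) ∩ VR := by
    rintro y ⟨x, hx, hxy⟩
    have hadj : G.Adj x y := hxy.adj_sub
    have hyX : y ∈ (Xᶜ : Set V) := by
      intro hy
      exact hXind x hx.1 y hy hadj
    refine ⟨hyX, ?_⟩
    by_contra hyVR
    exact hcross y hyX hyVR x hx hadj.symm
  have hbal' : ((Xᶜ : Set V) ∩ VR).ncard ≤ (X ∩ VR).ncard := by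
    rwa [← Nat.card_coe_set_eq, ← Nat.card_coe_set_eq]
  have hEq : S = (Xᶜ : Set V) ∩ VR := by
    apply Set.eq_of_subset_of_ncard_le hsub (by rw [hcardS]; exact hbal') (Set.toFinite _)
  refine ⟨hEq.symm, ?_, ?_⟩
  · rw [← hEq, Nat.card_coe_set_eq, Nat.card_coe_set_eq, hcardS]
  · intro y hy
    rw [← hEq] at hy
    exact hy
end
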